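/- Let G = ⟨(12)(34), (13)(24)⟩ ≅ C₂ × C₂ act on k[x₁,x₂,x₃,x₄] over k of characteristic 2 by permuting variables, let I = Tr^G(k[x₁,...,x₄]) ⊂ k[x₁,...,x₄]^G, N = x₁x₂x₃x₄, and H = x₁x₂ + x₃x₄ + x₁x₃ + x₂x₄ + x₁x₄ + x₂x₃. Then (N, H) is a regular sequence on k[x₁,...,x₄]^G / I; in particular depth(k[x₁,...,x₄]^G / I) ≥ 2. -/

import Mathlib

set_option linter.unusedSectionVars false
set_option maxHeartbeats 1000000
set_option synthInstance.maxHeartbeats 400000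


open MvPolynomial

/-- The Klein four group `C₂ × C₂`. -/
abbrev K4 := Multiplicative (ZMod 2 × ZMod 2)

/-- The first generator `σ₁` of the Klein four group. -/
def s1 : K4 := Multiplicative.ofAdd (1, 0)

/-- The second generator `σ₂` of the Klein four group. -/
def s2 : K4 := Multiplicative.ofAdd (0, 1)

/-- The permutation `(12)(34)` of the four variables. -/
def e1 : Equiv.Perm (Fin 4) := Equiv.swap 0 1 * Equiv.swap 2 3

/-- The permutation `(13)(24)` of the four variables. -/
def e2 : Equiv.Perm (Fin 4) := Equiv.swap 0 2 * Equiv.swap 1 3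

/-- The permutation action of the Klein four group on the four variables. -/
def permOf (g : K4) : Equiv.Perm (Fin 4) :=
  e1 ^ (Multiplicative.toAdd g).1.val * e2 ^ (Multiplicative.toAdd g).2.val

/-- The ring of `H`-invariants in `R`. -/
def invSub (G R : Type) [Group G] [CommRing R] [MulSemiringAction G R]
    (H : Subgroup G) : Subring R where
  carrier := {f : R | ∀ h : H, (h : G) • f = f}
  mul_mem' := fun ha hb h => by rw [smul_mul', ha h, hb h]
  one_mem' := fun h => smul_one _
  add_mem' := fun ha hb h => by rw [smul_add, ha h, hb h]
  zero_mem' := fun h => smul_zero _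
  neg_mem' := fun ha h => by rw [smul_neg, (ha h : _)]

/-- The transfer ideal `I = Tr^G(k[V])·k[V]^G`, where `Tr^G(f) = Σ_{g∈G} g·f`. -/
noncomputable def transferIdealTriv (G R : Type) [Group G] [Fintype G] [CommRing R]
    [MulSemiringAction G R] : Ideal (invSub G R ⊤) :=
  Ideal.span {y | ∃ f : R, (y : R) = ∑ g : G, g • f}


namespace KleinAux
def e3 : Equiv.Perm (Fin 4) := e1 * e2

variable {k : Type} [Field k] [CharP k 2]

/-- action on exponents -/
noncomputable def act (σ : Equiv.Perm (Fin 4)) (d : Fin 4 →₀ ℕ) : Fin 4 →₀ ℕ := Finsupp.mapDomain σ d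

lemma act_apply (σ : Equiv.Perm (Fin 4)) (d : Fin 4 →₀ ℕ) (j : Fin 4) :
    act σ d j = d (σ⁻¹ j) := Finsupp.mapDomain_equiv_apply d j

lemma act_act (σ τ : Equiv.Perm (Fin 4)) (d : Fin 4 →₀ ℕ) :
    act σ (act τ d) = act (σ * τ) d := by
  ext j; simp [act_apply, Equiv.Perm.mul_apply]

lemma act_one (d : Fin 4 →₀ ℕ) : act 1 d = d := by ext j; simp [act_apply]

noncomputable def D (a b c d : ℕ) : Fin 4 →₀ ℕ := Finsupp.equivFunOnFinite.symm ![a, b, c, d]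

lemma D_apply (a b c d : ℕ) (i : Fin 4) : D a b c d i = ![a, b, c, d] i := rfl

lemma eq_D (d : Fin 4 →₀ ℕ) : d = D (d 0) (d 1) (d 2) (d 3) := by
  ext i; fin_cases i <;> simp [D_apply]

lemma act_e1_D (a b c d : ℕ) : act e1 (D a b c d) = D b a d c := by
  ext i; fin_cases i <;>
    simp [act_apply, D_apply, show e1⁻¹ 0 = 1 ∧ e1⁻¹ 1 = 0 ∧ e1⁻¹ 2 = 3 ∧ e1⁻¹ 3 = 2 from by decide]

lemma act_e2_D (a b c d : ℕ) : act e2 (D a b c d) = D c d a b := by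
  ext i; fin_cases i <;>
    simp [act_apply, D_apply, show e2⁻¹ 0 = 2 ∧ e2⁻¹ 1 = 3 ∧ e2⁻¹ 2 = 0 ∧ e2⁻¹ 3 = 1 from by decide]

lemma act_e3_D (a b c d : ℕ) : act e3 (D a b c d) = D d c b a := by
  ext i; fin_cases i <;>
    simp [act_apply, D_apply, show e3⁻¹ 0 = 3 ∧ e3⁻¹ 1 = 2 ∧ e3⁻¹ 2 = 1 ∧ e3⁻¹ 3 = 0 from by decide]

lemma coeff_rename_act (σ : Equiv.Perm (Fin 4)) (hσ : σ * σ = 1) (f : MvPolynomial (Fin 4) k)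
    (e : Fin 4 →₀ ℕ) : coeff e (rename σ f) = coeff (act σ e) f := by
  have h := coeff_rename_mapDomain (⇑σ) σ.injective f (act σ e)
  have h2 : Finsupp.mapDomain (⇑σ) (act σ e) = e := by
    show act σ (act σ e) = e
    rw [act_act, hσ, act_one]
  rwa [h2] at h

noncomputable def Tr (f : MvPolynomial (Fin 4) k) : MvPolynomial (Fin 4) k :=
  f + rename e1 f + rename e2 f + rename e3 f

lemma e1_inv : e1 * e1 = 1 := by decide
lemma e2_inv : e2 * e2 = 1 := by decide
lemma e3_inv : e3 * e3 = 1 := by decide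

lemma coeff_Tr (f : MvPolynomial (Fin 4) k) (e : Fin 4 →₀ ℕ) :
    coeff e (Tr f) = coeff e f + coeff (act e1 e) f + coeff (act e2 e) f + coeff (act e3 e) f := by
  simp [Tr, coeff_add, coeff_rename_act e1 e1_inv, coeff_rename_act e2 e2_inv,
    coeff_rename_act e3 e3_inv]

/-- exponents with nontrivial stabilizer -/
def nonfree (e : Fin 4 →₀ ℕ) : Prop := act e1 e = e ∨ act e2 e = e ∨ act e3 e = e

lemma add_self (x : k) : x + x = 0 := by
  have : (2 : k) = 0 := by exact_mod_cast CharP.cast_eq_zero k 2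
  rw [← two_mul, this, zero_mul]

lemma coeff_Tr_nonfree (f : MvPolynomial (Fin 4) k) (e : Fin 4 →₀ ℕ) (he : nonfree e) :
    coeff e (Tr f) = 0 := by
  rw [coeff_Tr]
  have h12 : act e1 (act e2 e) = act e3 e := by rw [act_act]; rfl
  have h21 : act e2 (act e1 e) = act e3 e := by
    rw [act_act, show e2 * e1 = e3 from by decide]
  have h13 : act e1 (act e3 e) = act e2 e := by
    rw [act_act, show e1 * e3 = e2 from by decide]
  rcases he with h | h | h
  · rw [h, ← h21, h]
    linear_combination add_self (coeff e f) + add_self (coeff (act e2 e) f)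
  · rw [h, ← h12, h]
    linear_combination add_self (coeff e f) + add_self (coeff (act e1 e) f)
  · rw [h, ← h13, h]
    linear_combination add_self (coeff e f) + add_self (coeff (act e1 e) f)


/-- invariance under the Klein group -/
def Inv (a : MvPolynomial (Fin 4) k) : Prop := rename e1 a = a ∧ rename e2 a = a

lemma comp_coe (σ τ : Equiv.Perm (Fin 4)) : (⇑σ ∘ ⇑τ) = ⇑(σ * τ) := rfl

lemma Inv.rename_e3 {a : MvPolynomial (Fin 4) k} (h : Inv a) : rename e3 a = a := by
  have : rename (⇑e1 ∘ ⇑e2) a = a := by rw [← rename_rename, h.2, h.1]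
  rwa [comp_coe, show e1 * e2 = e3 from rfl] at this

lemma Inv.coeff_act {a : MvPolynomial (Fin 4) k} (h : Inv a) (σ : Equiv.Perm (Fin 4))
    (hσ : σ = e1 ∨ σ = e2 ∨ σ = e3) (e : Fin 4 →₀ ℕ) : coeff (act σ e) a = coeff e a := by
  rcases hσ with rfl | rfl | rfl
  · rw [← coeff_rename_act e1 e1_inv, h.1]
  · rw [← coeff_rename_act e2 e2_inv, h.2]
  · rw [← coeff_rename_act e3 e3_inv, h.rename_e3]

lemma Inv.Tr (f : MvPolynomial (Fin 4) k) : Inv (Tr f) := by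
  constructor
  · show rename e1 (f + rename e1 f + rename e2 f + rename e3 f) = _
    rw [map_add, map_add, map_add, rename_rename, rename_rename, rename_rename,
      comp_coe, comp_coe, comp_coe, show e1 * e1 = 1 from e1_inv,
      show e1 * e2 = e3 from rfl, show e1 * e3 = e2 from by decide,
      show ⇑(1 : Equiv.Perm (Fin 4)) = id from rfl, rename_id, AlgHom.id_apply]
    unfold KleinAux.Tr; ring
  · show rename e2 (f + rename e1 f + rename e2 f + rename e3 f) = _
    rw [map_add, map_add, map_add, rename_rename, rename_rename, rename_rename,
      comp_coe, comp_coe, comp_coe, show e2 * e2 = 1 from e2_inv,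
      show e2 * e1 = e3 from by decide, show e2 * e3 = e1 from by decide,
      show ⇑(1 : Equiv.Perm (Fin 4)) = id from rfl, rename_id, AlgHom.id_apply]
    unfold KleinAux.Tr; ring

lemma Tr_add (f g : MvPolynomial (Fin 4) k) : Tr (f + g) = Tr f + Tr g := by
  unfold Tr; rw [map_add, map_add, map_add]; ring

lemma Tr_neg (f : MvPolynomial (Fin 4) k) : Tr (-f) = - Tr f := by
  unfold KleinAux.Tr; simp only [map_neg]; ring

lemma Tr_zero : Tr (0 : MvPolynomial (Fin 4) k) = 0 := by unfold KleinAux.Tr; simp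

lemma exists_Tr (m : ℕ) : ∀ a : MvPolynomial (Fin 4) k, a.support.card ≤ m → Inv a →
    (∀ e, nonfree e → coeff e a = 0) → ∃ f, a = Tr f := by
  induction m with
  | zero =>
    intro a hcard _ _
    refine ⟨0, ?_⟩
    rw [Tr_zero]
    have : a.support = ∅ := Finset.card_eq_zero.mp (Nat.le_zero.mp hcard)
    exact (MvPolynomial.support_eq_empty.mp this)
  | succ m ih =>
    intro a hcard ha h0
    by_cases hz : a = 0
    · exact ⟨0, by rw [hz, Tr_zero]⟩
    obtain ⟨d, hd⟩ := Finset.nonempty_iff_ne_empty.mpr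
      (fun h => hz (MvPolynomial.support_eq_empty.mp h))
    set t := coeff d a with htdef
    have ht : t ≠ 0 := MvPolynomial.mem_support_iff.mp hd
    have hfree : ¬ nonfree d := fun h => ht (h0 d h)
    rw [nonfree] at hfree
    push_neg at hfree
    obtain ⟨hf1, hf2, hf3⟩ := hfree
    set a' := a - Tr (monomial d t) with ha'def
    have hInv' : Inv a' := by
      constructor
      · rw [ha'def, map_sub, ha.1, (Inv.Tr (monomial d t)).1]
      · rw [ha'def, map_sub, ha.2, (Inv.Tr (monomial d t)).2]
    have hnf' : ∀ e, nonfree e → coeff e a' = 0 := by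
      intro e he
      rw [ha'def, coeff_sub, h0 e he, coeff_Tr_nonfree _ e he, sub_zero]
    have hcm : ∀ σ : Equiv.Perm (Fin 4), σ * σ = 1 → ∀ e, e ≠ act σ d →
        coeff (act σ e) (monomial d t) = 0 := by
      intro σ hσ e hne
      rw [coeff_monomial, if_neg]
      intro hdd
      exact hne (by rw [hdd, act_act, hσ, act_one])
    have horb : ∀ e, coeff e (Tr (monomial d t)) ≠ 0 →
        e = d ∨ e = act e1 d ∨ e = act e2 d ∨ e = act e3 d := by
      intro e he
      by_contra hcon
      push_neg at hcon
      obtain ⟨h1, h2, h3, h4⟩ := hcon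
      rw [coeff_Tr, coeff_monomial, if_neg (fun h => h1 h.symm),
        hcm e1 e1_inv e h2, hcm e2 e2_inv e h3, hcm e3 e3_inv e h4] at he
      simp at he
    have hTrd : coeff d (Tr (monomial d t)) = t := by
      rw [coeff_Tr, coeff_monomial, if_pos rfl,
        hcm e1 e1_inv d (fun h => hf1 h.symm), hcm e2 e2_inv d (fun h => hf2 h.symm),
        hcm e3 e3_inv d (fun h => hf3 h.symm)]
      ring
    have hsub : a'.support ⊆ a.support.erase d := by
      intro e he
      rw [MvPolynomial.mem_support_iff] at he
      have hed : e ≠ d := by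
        intro h
        subst h
        rw [ha'def, coeff_sub, hTrd, ← htdef, sub_self] at he
        exact he rfl
      rw [Finset.mem_erase]
      refine ⟨hed, MvPolynomial.mem_support_iff.mpr ?_⟩
      intro hea
      rw [ha'def, coeff_sub, hea, zero_sub, neg_ne_zero] at he
      rcases horb e he with h | h | h | h
      · exact hed h
      all_goals {
        subst h
        rw [Inv.coeff_act ha _ (by tauto) d] at hea
        exact ht hea }
    have hcard' : a'.support.card ≤ m := by
      have h1 : (a.support.erase d).card < a.support.card := Finset.card_erase_lt_of_mem hd
      have := Finset.card_le_card hsub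
      omega
    obtain ⟨f, hf⟩ := ih a' hcard' hInv' hnf'
    refine ⟨f + monomial d t, ?_⟩
    rw [Tr_add, ← hf, ha'def, sub_add_cancel]

/-! ### the special polynomials -/

noncomputable def nn : Fin 4 →₀ ℕ := D 1 1 1 1

lemma nn_apply (j : Fin 4) : nn j = 1 := by fin_cases j <;> rfl

noncomputable def Np : MvPolynomial (Fin 4) k := monomial nn 1

lemma X_mul_X (i j : Fin 4) :
    (X i * X j : MvPolynomial (Fin 4) k) = monomial (Finsupp.single i 1 + Finsupp.single j 1) 1 := by
  rw [show (X i : MvPolynomial (Fin 4) k) = monomial (Finsupp.single i 1) 1 from rfl,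
    show (X j : MvPolynomial (Fin 4) k) = monomial (Finsupp.single j 1) 1 from rfl,
    monomial_mul, one_mul]

lemma XX01 : (X 0 * X 1 : MvPolynomial (Fin 4) k) = monomial (D 1 1 0 0) 1 := by
  have h : Finsupp.single (0:Fin 4) 1 + Finsupp.single 1 1 = D 1 1 0 0 := by
    ext l; fin_cases l <;> simp [Finsupp.single_apply, D_apply]
  rw [X_mul_X, h]
lemma XX23 : (X 2 * X 3 : MvPolynomial (Fin 4) k) = monomial (D 0 0 1 1) 1 := by
  have h : Finsupp.single (2:Fin 4) 1 + Finsupp.single 3 1 = D 0 0 1 1 := by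
    ext l; fin_cases l <;> simp [Finsupp.single_apply, D_apply]
  rw [X_mul_X, h]
lemma XX02 : (X 0 * X 2 : MvPolynomial (Fin 4) k) = monomial (D 1 0 1 0) 1 := by
  have h : Finsupp.single (0:Fin 4) 1 + Finsupp.single 2 1 = D 1 0 1 0 := by
    ext l; fin_cases l <;> simp [Finsupp.single_apply, D_apply]
  rw [X_mul_X, h]
lemma XX13 : (X 1 * X 3 : MvPolynomial (Fin 4) k) = monomial (D 0 1 0 1) 1 := by
  have h : Finsupp.single (1:Fin 4) 1 + Finsupp.single 3 1 = D 0 1 0 1 := by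
    ext l; fin_cases l <;> simp [Finsupp.single_apply, D_apply]
  rw [X_mul_X, h]
lemma XX03 : (X 0 * X 3 : MvPolynomial (Fin 4) k) = monomial (D 1 0 0 1) 1 := by
  have h : Finsupp.single (0:Fin 4) 1 + Finsupp.single 3 1 = D 1 0 0 1 := by
    ext l; fin_cases l <;> simp [Finsupp.single_apply, D_apply]
  rw [X_mul_X, h]
lemma XX12 : (X 1 * X 2 : MvPolynomial (Fin 4) k) = monomial (D 0 1 1 0) 1 := by
  have h : Finsupp.single (1:Fin 4) 1 + Finsupp.single 2 1 = D 0 1 1 0 := by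
    ext l; fin_cases l <;> simp [Finsupp.single_apply, D_apply]
  rw [X_mul_X, h]

lemma Np_eq : (Np : MvPolynomial (Fin 4) k) = X 0 * X 1 * X 2 * X 3 := by
  rw [show (X 0 * X 1 * X 2 * X 3 : MvPolynomial (Fin 4) k) = (X 0 * X 1) * (X 2 * X 3) by ring,
    XX01, XX23, monomial_mul, one_mul]
  have h : D 1 1 0 0 + D 0 0 1 1 = nn := by
    ext l; fin_cases l <;> simp [D_apply, Finsupp.add_apply, nn_apply]
  rw [h]; rfl

noncomputable def Hp : MvPolynomial (Fin 4) k :=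
  X 0 * X 1 + X 2 * X 3 + X 0 * X 2 + X 1 * X 3 + X 0 * X 3 + X 1 * X 2

lemma D_le_D {a b c d a' b' c' d' : ℕ} :
    D a b c d ≤ D a' b' c' d' ↔ (a ≤ a' ∧ b ≤ b' ∧ c ≤ c' ∧ d ≤ d') := by
  rw [Finsupp.le_def]
  constructor
  · intro h
    exact ⟨h 0, h 1, h 2, h 3⟩
  · rintro ⟨h0, h1, h2, h3⟩ i
    fin_cases i <;> simpa [D_apply]

lemma D_sub (a b c d a' b' c' d' : ℕ) :
    D a b c d - D a' b' c' d' = D (a - a') (b - b') (c - c') (d - d') := by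
  ext i; fin_cases i <;> simp [Finsupp.tsub_apply, D_apply]

lemma nn_eq : nn = D 1 1 1 1 := rfl

lemma Hp_mul (a : MvPolynomial (Fin 4) k) : Hp * a =
    monomial (D 1 1 0 0) 1 * a + monomial (D 0 0 1 1) 1 * a + monomial (D 1 0 1 0) 1 * a +
    monomial (D 0 1 0 1) 1 * a + monomial (D 1 0 0 1) 1 * a + monomial (D 0 1 1 0) 1 * a := by
  rw [Hp, ← XX01, ← XX23, ← XX02, ← XX13, ← XX03, ← XX12]; ring

lemma P1 (a b : MvPolynomial (Fin 4) k)
    (h : ∀ e, nonfree e → coeff e (Hp * a) = coeff e (Np * b)) (p : ℕ) :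
    coeff (D p p 0 0) a = 0 := by
  have hnf : nonfree (D (p+1) (p+1) 0 0) := Or.inl (by rw [act_e1_D])
  have h2 := h _ hnf
  rw [show (Np : MvPolynomial (Fin 4) k) = monomial nn 1 from rfl, coeff_monomial_mul',
    if_neg (by rw [nn_eq, D_le_D]; omega), Hp_mul] at h2
  simp only [coeff_add, coeff_monomial_mul', one_mul, D_le_D, D_sub] at h2
  norm_num at h2
  exact h2

lemma P2 (a b : MvPolynomial (Fin 4) k)
    (h : ∀ e, nonfree e → coeff e (Hp * a) = coeff e (Np * b)) (p : ℕ) :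
    coeff (D p 0 p 0) a = 0 := by
  have hnf : nonfree (D (p+1) 0 (p+1) 0) := Or.inr (Or.inl (by rw [act_e2_D]))
  have h2 := h _ hnf
  rw [show (Np : MvPolynomial (Fin 4) k) = monomial nn 1 from rfl, coeff_monomial_mul',
    if_neg (by rw [nn_eq, D_le_D]; omega), Hp_mul] at h2
  simp only [coeff_add, coeff_monomial_mul', one_mul, D_le_D, D_sub] at h2
  norm_num at h2
  exact h2

lemma P3 (a b : MvPolynomial (Fin 4) k)
    (h : ∀ e, nonfree e → coeff e (Hp * a) = coeff e (Np * b)) (p : ℕ) :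
    coeff (D p 0 0 p) a = 0 := by
  have hnf : nonfree (D (p+1) 0 0 (p+1)) := Or.inr (Or.inr (by rw [act_e3_D]))
  have h2 := h _ hnf
  rw [show (Np : MvPolynomial (Fin 4) k) = monomial nn 1 from rfl, coeff_monomial_mul',
    if_neg (by rw [nn_eq, D_le_D]; omega), Hp_mul] at h2
  simp only [coeff_add, coeff_monomial_mul', one_mul, D_le_D, D_sub] at h2
  norm_num at h2
  exact h2

lemma vanish (a b : MvPolynomial (Fin 4) k) (ha : Inv a)
    (h : ∀ e, nonfree e → coeff e (Hp * a) = coeff e (Np * b)) :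
    ∀ d, nonfree d → ¬ nn ≤ d → coeff d a = 0 := by
  intro d hnf hnle
  have hzero : d 0 = 0 ∨ d 1 = 0 ∨ d 2 = 0 ∨ d 3 = 0 := by
    rw [Finsupp.le_def] at hnle
    push_neg at hnle
    obtain ⟨i, hi⟩ := hnle
    have hi' : d i = 0 := by have := nn_apply i; omega
    fin_cases i
    · exact Or.inl hi'
    · exact Or.inr (Or.inl hi')
    · exact Or.inr (Or.inr (Or.inl hi'))
    · exact Or.inr (Or.inr (Or.inr hi'))
  have hD : coeff d a = coeff (D (d 0) (d 1) (d 2) (d 3)) a := by rw [← eq_D d]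
  rcases hnf with hp | hp | hp
  · have h10 : d 1 = d 0 := by
      have := congrArg (fun x : Fin 4 →₀ ℕ => x 0) hp
      simpa [act_apply, show e1⁻¹ 0 = 1 from by decide] using this
    have h32 : d 3 = d 2 := by
      have := congrArg (fun x : Fin 4 →₀ ℕ => x 2) hp
      simpa [act_apply, show e1⁻¹ 2 = 3 from by decide] using this
    have hc : (d 0 = 0 ∧ d 1 = 0) ∨ (d 2 = 0 ∧ d 3 = 0) := by omega
    rcases hc with ⟨hx, hy⟩ | ⟨hx, hy⟩
    · rw [hD, hx, hy, h32, show D 0 0 (d 2) (d 2) = act e2 (D (d 2) (d 2) 0 0) from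
        (act_e2_D _ _ _ _).symm, Inv.coeff_act ha e2 (by tauto)]
      exact P1 a b h _
    · rw [hD, hx, hy, h10]
      exact P1 a b h _
  · have h20 : d 2 = d 0 := by
      have := congrArg (fun x : Fin 4 →₀ ℕ => x 0) hp
      simpa [act_apply, show e2⁻¹ 0 = 2 from by decide] using this
    have h31 : d 3 = d 1 := by
      have := congrArg (fun x : Fin 4 →₀ ℕ => x 1) hp
      simpa [act_apply, show e2⁻¹ 1 = 3 from by decide] using this
    have hc : (d 0 = 0 ∧ d 2 = 0) ∨ (d 1 = 0 ∧ d 3 = 0) := by omega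
    rcases hc with ⟨hx, hy⟩ | ⟨hx, hy⟩
    · rw [hD, hx, hy, h31, show D 0 (d 1) 0 (d 1) = act e1 (D (d 1) 0 (d 1) 0) from
        (act_e1_D _ _ _ _).symm, Inv.coeff_act ha e1 (by tauto)]
      exact P2 a b h _
    · rw [hD, hx, hy, h20]
      exact P2 a b h _
  · have h30 : d 3 = d 0 := by
      have := congrArg (fun x : Fin 4 →₀ ℕ => x 0) hp
      simpa [act_apply, show e3⁻¹ 0 = 3 from by decide] using this
    have h21 : d 2 = d 1 := by
      have := congrArg (fun x : Fin 4 →₀ ℕ => x 1) hp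
      simpa [act_apply, show e3⁻¹ 1 = 2 from by decide] using this
    have hc : (d 0 = 0 ∧ d 3 = 0) ∨ (d 1 = 0 ∧ d 2 = 0) := by omega
    rcases hc with ⟨hx, hy⟩ | ⟨hx, hy⟩
    · rw [hD, hx, hy, h21, show D 0 (d 1) (d 1) 0 = act e1 (D (d 1) 0 0 (d 1)) from
        (act_e1_D _ _ _ _).symm, Inv.coeff_act ha e1 (by tauto)]
      exact P3 a b h _
    · rw [hD, hx, hy, h30]
      exact P3 a b h _

lemma act_add (σ : Equiv.Perm (Fin 4)) (x y : Fin 4 →₀ ℕ) :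
    act σ (x + y) = act σ x + act σ y := by
  ext j; simp [act_apply, Finsupp.add_apply]

lemma act_nn (σ : Equiv.Perm (Fin 4)) : act σ nn = nn := by
  ext j; simp [act_apply, nn_apply]

lemma act_sub_nn (σ : Equiv.Perm (Fin 4)) (e : Fin 4 →₀ ℕ) :
    act σ (e - nn) = act σ e - nn := by
  ext j; simp [act_apply, Finsupp.tsub_apply, nn_apply]

lemma nonfree_add_nn {e : Fin 4 →₀ ℕ} (he : nonfree e) : nonfree (e + nn) := by
  rcases he with h | h | h
  · exact Or.inl (by rw [act_add, act_nn, h])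
  · exact Or.inr (Or.inl (by rw [act_add, act_nn, h]))
  · exact Or.inr (Or.inr (by rw [act_add, act_nn, h]))

lemma nn_le_act (σ : Equiv.Perm (Fin 4)) (e : Fin 4 →₀ ℕ) : nn ≤ act σ e ↔ nn ≤ e := by
  rw [Finsupp.le_def, Finsupp.le_def]
  constructor
  · intro h j
    have := h (σ j)
    rwa [act_apply, nn_apply, ← Equiv.Perm.mul_apply, inv_mul_cancel, Equiv.Perm.one_apply, ← nn_apply j] at this
  · intro h j
    rw [act_apply, nn_apply, ← nn_apply (σ⁻¹ j)]
    exact h _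

/-- The key regularity lemma for `N`. -/
lemma lemma1 (a f : MvPolynomial (Fin 4) k) (ha : Inv a) (h : Np * a = Tr f) :
    ∃ f', a = Tr f' := by
  apply exists_Tr a.support.card a le_rfl ha
  intro e he
  have h2 := congrArg (coeff (e + nn)) h
  rw [show (Np : MvPolynomial (Fin 4) k) = monomial nn 1 from rfl, coeff_monomial_mul',
    if_pos le_add_self, add_tsub_cancel_right, one_mul,
    coeff_Tr_nonfree f _ (nonfree_add_nn he)] at h2
  exact h2

noncomputable def upart (a : MvPolynomial (Fin 4) k) : MvPolynomial (Fin 4) k :=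
  ∑ e ∈ a.support.filter (fun e => nn ≤ e), monomial e (coeff e a)

noncomputable def qpart (a : MvPolynomial (Fin 4) k) : MvPolynomial (Fin 4) k :=
  ∑ e ∈ a.support.filter (fun e => nn ≤ e), monomial (e - nn) (coeff e a)

lemma Np_mul_qpart (a : MvPolynomial (Fin 4) k) : Np * qpart a = upart a := by
  rw [upart, qpart, Finset.mul_sum]
  apply Finset.sum_congr rfl
  intro e he
  rw [show (Np : MvPolynomial (Fin 4) k) = monomial nn 1 from rfl, monomial_mul, one_mul,
    add_tsub_cancel_of_le (Finset.mem_filter.mp he).2]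

lemma coeff_upart (a : MvPolynomial (Fin 4) k) (e : Fin 4 →₀ ℕ) :
    coeff e (upart a) = if nn ≤ e then coeff e a else 0 := by
  rw [upart, coeff_sum]
  simp_rw [coeff_monomial]
  rw [Finset.sum_ite_eq']
  by_cases h1 : nn ≤ e
  · by_cases h2 : coeff e a = 0
    · simp [Finset.mem_filter, MvPolynomial.mem_support_iff, h1, h2]
    · simp [Finset.mem_filter, MvPolynomial.mem_support_iff, h1, h2]
  · simp [Finset.mem_filter, h1]

lemma rename_sumshift (a : MvPolynomial (Fin 4) k) (σ : Equiv.Perm (Fin 4)) (hσ : σ * σ = 1)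
    (hca : ∀ e, coeff (act σ e) a = coeff e a)
    (t : (Fin 4 →₀ ℕ) → (Fin 4 →₀ ℕ)) (ht : ∀ e, act σ (t e) = t (act σ e)) :
    rename σ (∑ e ∈ a.support.filter (fun e => nn ≤ e), monomial (t e) (coeff e a))
      = ∑ e ∈ a.support.filter (fun e => nn ≤ e), monomial (t e) (coeff e a) := by
  have hact2 : ∀ e, act σ (act σ e) = e := by
    intro e; rw [act_act, hσ, act_one]
  have hmem : ∀ e, e ∈ a.support.filter (fun e => nn ≤ e) →
      act σ e ∈ a.support.filter (fun e => nn ≤ e) := by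
    intro e he
    rw [Finset.mem_filter] at he ⊢
    refine ⟨MvPolynomial.mem_support_iff.mpr ?_, (nn_le_act σ e).mpr he.2⟩
    rw [hca]
    exact MvPolynomial.mem_support_iff.mp he.1
  rw [map_sum]
  simp_rw [rename_monomial]
  refine Finset.sum_nbij' (i := fun e => act σ e) (j := fun e => act σ e)
    hmem hmem (fun e _ => hact2 e) (fun e _ => hact2 e) ?_
  intro e he
  show monomial (act σ (t e)) (coeff e a) = monomial (t (act σ e)) (coeff (act σ e) a)
  rw [ht, hca]

lemma Inv_upart {a : MvPolynomial (Fin 4) k} (ha : Inv a) : Inv (upart a) :=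
  ⟨rename_sumshift a e1 e1_inv (ha.coeff_act e1 (by tauto)) id (fun e => rfl),
   rename_sumshift a e2 e2_inv (ha.coeff_act e2 (by tauto)) id (fun e => rfl)⟩

lemma Inv_qpart {a : MvPolynomial (Fin 4) k} (ha : Inv a) : Inv (qpart a) :=
  ⟨rename_sumshift a e1 e1_inv (ha.coeff_act e1 (by tauto)) (fun e => e - nn)
      (fun e => act_sub_nn e1 e),
   rename_sumshift a e2 e2_inv (ha.coeff_act e2 (by tauto)) (fun e => e - nn)
      (fun e => act_sub_nn e2 e)⟩

/-- The key regularity lemma for `H` modulo `N`. -/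
lemma lemma2 (a c f : MvPolynomial (Fin 4) k) (ha : Inv a) (h : Hp * a = Np * c + Tr f) :
    ∃ b' f', Inv b' ∧ a = Np * b' + Tr f' := by
  have hv : ∀ d, nonfree d → ¬ nn ≤ d → coeff d a = 0 := by
    apply vanish a c ha
    intro e he
    have := congrArg (coeff e) h
    rwa [coeff_add, coeff_Tr_nonfree f e he, add_zero] at this
  have h2 : ∃ f', a - upart a = Tr f' := by
    apply exists_Tr (a - upart a).support.card _ le_rfl
    · exact ⟨by rw [map_sub, ha.1, (Inv_upart ha).1], by rw [map_sub, ha.2, (Inv_upart ha).2]⟩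
    · intro e he
      rw [coeff_sub, coeff_upart]
      by_cases h1 : nn ≤ e
      · rw [if_pos h1, sub_self]
      · rw [if_neg h1, sub_zero]
        exact hv e he h1
  obtain ⟨f', hf'⟩ := h2
  exact ⟨qpart a, f', Inv_qpart ha, by rw [Np_mul_qpart, ← hf']; ring⟩

/-- the transfer image as an ideal of the invariant ring -/
def transferSet (G R : Type) [Group G] [Fintype G] [CommRing R] [MulSemiringAction G R] :
    Ideal (invSub G R ⊤) where
  carrier := {y | ∃ f : R, (y : R) = ∑ g : G, g • f}
  zero_mem' := ⟨0, by simp⟩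
  add_mem' := by
    rintro y z ⟨f, hf⟩ ⟨f', hf'⟩
    refine ⟨f + f', ?_⟩
    push_cast [hf, hf']
    rw [← Finset.sum_add_distrib]
    simp [smul_add]
  smul_mem' := by
    rintro c y ⟨f, hf⟩
    refine ⟨(c : R) * f, ?_⟩
    have hc : True := trivial
    show ((c * y : invSub G R ⊤) : R) = _
    push_cast [hf]
    rw [Finset.mul_sum]
    apply Finset.sum_congr rfl
    intro g _
    rw [smul_mul', c.2 ⟨g, trivial⟩]

lemma mem_transfer {G R : Type} [Group G] [Fintype G] [CommRing R] [MulSemiringAction G R]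
    (y : invSub G R ⊤) :
    y ∈ transferIdealTriv G R ↔ ∃ f : R, (y : R) = ∑ g : G, g • f := by
  have h : transferIdealTriv G R = transferSet G R := by
    rw [transferIdealTriv, show {y : invSub G R ⊤ | ∃ f : R, (y : R) = ∑ g : G, g • f}
      = (transferSet G R : Set (invSub G R ⊤)) from rfl, Ideal.span_eq]
  rw [h]
  rfl


end KleinAux

open KleinAux in
/-- for the Klein four group permuting the variables of
`k[x₁,x₂,x₃,x₄]` (characteristic 2) via `(12)(34)` and `(13)(24)`, with
`I = Tr^G(k[x₁,…,x₄])`, `N = x₁x₂x₃x₄` and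
`H = x₁x₂ + x₃x₄ + x₁x₃ + x₂x₄ + x₁x₄ + x₂x₃`, the pair `(N, H)` is a regular
sequence on `k[x₁,…,x₄]^G / I`; in particular `depth(k[x₁,…,x₄]^G / I) ≥ 2`. -/
theorem klein_regular_N_H_regular_sequence
    (k : Type) [Field k] [CharP k 2]
    [MulSemiringAction K4 (MvPolynomial (Fin 4) k)]
    [SMulCommClass K4 k (MvPolynomial (Fin 4) k)]
    (hact : ∀ (g : K4) (f : MvPolynomial (Fin 4) k), g • f = rename (permOf g) f) :
    ∃ yN yH : invSub K4 (MvPolynomial (Fin 4) k) ⊤,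
      (yN : MvPolynomial (Fin 4) k) = X 0 * X 1 * X 2 * X 3 ∧
      (yH : MvPolynomial (Fin 4) k) =
        X 0 * X 1 + X 2 * X 3 + X 0 * X 2 + X 1 * X 3 + X 0 * X 3 + X 1 * X 2 ∧
      -- `N` is a non-zerodivisor on `k[V]^G / I`:
      Ideal.Quotient.mk (transferIdealTriv K4 (MvPolynomial (Fin 4) k)) yN ∈
        nonZeroDivisors ((invSub K4 (MvPolynomial (Fin 4) k) ⊤) ⧸
          transferIdealTriv K4 (MvPolynomial (Fin 4) k)) ∧
      -- `H` is a non-zerodivisor on `(k[V]^G / I) / (N)`: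
      (∀ r : (invSub K4 (MvPolynomial (Fin 4) k) ⊤) ⧸
          transferIdealTriv K4 (MvPolynomial (Fin 4) k),
        Ideal.Quotient.mk (transferIdealTriv K4 (MvPolynomial (Fin 4) k)) yH * r ∈
            Ideal.span {Ideal.Quotient.mk (transferIdealTriv K4 (MvPolynomial (Fin 4) k)) yN} →
          r ∈ Ideal.span
            {Ideal.Quotient.mk (transferIdealTriv K4 (MvPolynomial (Fin 4) k)) yN}) := by
  classical
  have permOf_cases : ∀ g : K4, permOf g = 1 ∨ permOf g = e1 ∨ permOf g = e2 ∨ permOf g = e3 := by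
    decide
  have hmemInv : ∀ p : MvPolynomial (Fin 4) k, Inv p →
      p ∈ invSub K4 (MvPolynomial (Fin 4) k) ⊤ := by
    intro p hp
    show ∀ h : (⊤ : Subgroup K4), (h : K4) • p = p
    intro h
    rw [hact]
    rcases permOf_cases (h : K4) with h1 | h1 | h1 | h1 <;> rw [h1]
    · rw [show ⇑(1 : Equiv.Perm (Fin 4)) = id from rfl, rename_id, AlgHom.id_apply]
    · exact hp.1
    · exact hp.2
    · exact hp.rename_e3
  have hInvMem : ∀ y : invSub K4 (MvPolynomial (Fin 4) k) ⊤,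
      Inv (y : MvPolynomial (Fin 4) k) := by
    intro y
    have hy : ∀ h : (⊤ : Subgroup K4), (h : K4) • (y : MvPolynomial (Fin 4) k) = y := y.2
    have h1 := hy ⟨s1, trivial⟩
    have h2 := hy ⟨s2, trivial⟩
    rw [hact] at h1 h2
    constructor
    · rw [show e1 = permOf s1 from by decide]; exact h1
    · rw [show e2 = permOf s2 from by decide]; exact h2
  have sumTr : ∀ f : MvPolynomial (Fin 4) k, (∑ g : K4, g • f) = Tr f := by
    intro f
    rw [show (Finset.univ : Finset K4) = {1, s1, s2, s1 * s2} from by decide]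
    rw [Finset.sum_insert (by decide), Finset.sum_insert (by decide),
      Finset.sum_insert (by decide), Finset.sum_singleton]
    rw [hact, hact, hact, hact,
      show permOf 1 = 1 from by decide, show permOf s1 = e1 from by decide,
      show permOf s2 = e2 from by decide, show permOf (s1 * s2) = e3 from by decide,
      show ⇑(1 : Equiv.Perm (Fin 4)) = id from rfl, rename_id, AlgHom.id_apply]
    unfold KleinAux.Tr
    ring
  have memI : ∀ y : invSub K4 (MvPolynomial (Fin 4) k) ⊤,
      y ∈ transferIdealTriv K4 (MvPolynomial (Fin 4) k) ↔
        ∃ f, (y : MvPolynomial (Fin 4) k) = Tr f := by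
    intro y
    rw [mem_transfer]
    constructor
    · rintro ⟨f, hf⟩; exact ⟨f, by rwa [sumTr] at hf⟩
    · rintro ⟨f, hf⟩; exact ⟨f, by rwa [sumTr]⟩
  have hNInv : Inv (Np : MvPolynomial (Fin 4) k) := by
    constructor
    · rw [show (Np : MvPolynomial (Fin 4) k) = monomial nn 1 from rfl, rename_monomial,
        show Finsupp.mapDomain ⇑e1 nn = nn from act_nn e1]
    · rw [show (Np : MvPolynomial (Fin 4) k) = monomial nn 1 from rfl, rename_monomial,
        show Finsupp.mapDomain ⇑e2 nn = nn from act_nn e2]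
  have hHInv : Inv (Hp : MvPolynomial (Fin 4) k) := by
    constructor
    · simp only [Hp, map_add, map_mul, rename_X,
        show e1 0 = 1 from by decide, show e1 1 = 0 from by decide,
        show e1 2 = 3 from by decide, show e1 3 = 2 from by decide]
      ring
    · simp only [Hp, map_add, map_mul, rename_X,
        show e2 0 = 2 from by decide, show e2 1 = 3 from by decide,
        show e2 2 = 0 from by decide, show e2 3 = 1 from by decide]
      ring
  refine ⟨⟨Np, hmemInv _ hNInv⟩, ⟨Hp, hmemInv _ hHInv⟩, Np_eq, rfl, ?_, ?_⟩
  · rw [mem_nonZeroDivisors_iff_right]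
    intro z hz
    obtain ⟨A, rfl⟩ := Ideal.Quotient.mk_surjective z
    rw [← map_mul, Ideal.Quotient.eq_zero_iff_mem, memI] at hz
    obtain ⟨f, hf⟩ := hz
    rw [Ideal.Quotient.eq_zero_iff_mem, memI]
    apply lemma1 (A : MvPolynomial (Fin 4) k) f (hInvMem A)
    have hco : ((A * ⟨Np, hmemInv _ hNInv⟩ : invSub K4 (MvPolynomial (Fin 4) k) ⊤) :
        MvPolynomial (Fin 4) k) = (A : MvPolynomial (Fin 4) k) * Np := rfl
    rw [hco] at hf
    rw [mul_comm]
    exact hf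
  · intro r hr
    obtain ⟨A, rfl⟩ := Ideal.Quotient.mk_surjective r
    rw [Ideal.mem_span_singleton'] at hr
    obtain ⟨u, hu⟩ := hr
    obtain ⟨Cc, rfl⟩ := Ideal.Quotient.mk_surjective u
    rw [← map_mul, ← map_mul, Ideal.Quotient.eq, memI] at hu
    obtain ⟨f, hf⟩ := hu
    have hco : ((Cc * ⟨Np, hmemInv _ hNInv⟩ - ⟨Hp, hmemInv _ hHInv⟩ * A :
        invSub K4 (MvPolynomial (Fin 4) k) ⊤) : MvPolynomial (Fin 4) k)
        = (Cc : MvPolynomial (Fin 4) k) * Np - Hp * (A : MvPolynomial (Fin 4) k) := rfl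
    rw [hco] at hf
    have hf' : Hp * (A : MvPolynomial (Fin 4) k) = Np * (Cc : MvPolynomial (Fin 4) k)
        + Tr (-f) := by
      rw [Tr_neg, ← hf]; ring
    obtain ⟨b', f', hb', hab⟩ := lemma2 _ _ _ (hInvMem A) hf'
    rw [Ideal.mem_span_singleton']
    refine ⟨Ideal.Quotient.mk _ ⟨b', hmemInv b' hb'⟩, ?_⟩
    rw [← map_mul, Ideal.Quotient.eq, memI]
    refine ⟨-f', ?_⟩
    have hco2 : ((⟨b', hmemInv b' hb'⟩ * ⟨Np, hmemInv _ hNInv⟩ - A :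
        invSub K4 (MvPolynomial (Fin 4) k) ⊤) : MvPolynomial (Fin 4) k)
        = b' * Np - (A : MvPolynomial (Fin 4) k) := rfl
    rw [hco2, Tr_neg, hab]
    ring
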